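/- Assume Schanuel's conjecture: for every n ≥ 1 and all complex numbers z₁,…,zₙ that are linearly independent over ℚ, the field ℚ(z₁,…,zₙ, exp(z₁),…,exp(zₙ)) has transcendence degree at least n over ℚ. Then: if α₁,…,α_k are positive real algebraic numbers which are multiplicatively independent (i.e., α₁^{m₁}⋯α_k^{m_k} = 1 with m₁,…,m_k ∈ ℤ implies m₁ = ⋯ = m_k = 0), the real numbers log α₁, …, log α_k are algebraically independent over ℚ. -/

import Mathlib

/-- Assuming Schanuel's conjecture (if `z₁, …, zₙ ∈ ℂ` are `ℚ`-linearly independent, then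
among the `2n` numbers `z₁, …, zₙ, exp z₁, …, exp zₙ` there are `n` that are algebraically
independent over `ℚ`), the natural logarithms of multiplicatively independent positive real
algebraic numbers are algebraically independent over `ℚ`. -/
theorem schanuel_implies_logs_algebraically_independent
    (schanuel : ∀ (n : ℕ) (z : Fin n → ℂ), LinearIndependent ℚ z →
      ∃ g : Fin n → ℂ, (∀ i, ∃ j, g i = z j ∨ g i = Complex.exp (z j)) ∧
        AlgebraicIndependent ℚ g)
    (k : ℕ) (α : Fin k → ℝ) (hpos : ∀ i, 0 < α i) (halg : ∀ i, IsAlgebraic ℚ (α i))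
    (hmult : ∀ m : Fin k → ℤ, (∏ i, α i ^ m i) = 1 → ∀ i, m i = 0) :
    AlgebraicIndependent ℚ (fun i => Real.log (α i)) := by
  set z : Fin k → ℂ := fun i => (Real.log (α i) : ℂ) with hz
  -- exp z i = α i
  have hexp : ∀ i, Complex.exp (z i) = (α i : ℂ) := by
    intro i
    rw [hz]
    rw [← Complex.ofReal_exp, Real.exp_log (hpos i)]
  -- linear independence of z over ℚ
  have hli : LinearIndependent ℚ z := by
    rw [Fintype.linearIndependent_iff]
    intro c hc
    -- pass to real sum
    have hcr : ∑ i, c i • Real.log (α i) = 0 := by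
      have : ((∑ i, c i • Real.log (α i) : ℝ) : ℂ) = 0 := by
        push_cast
        simpa [hz, Rat.smul_def] using hc
      exact_mod_cast this
    -- clear denominators
    set N : ℕ := ∏ i, (c i).den with hN
    have hNpos : 0 < N := Finset.prod_pos (fun i _ => (c i).pos)
    have hint : ∀ i, ∃ m : ℤ, (m : ℚ) = (N : ℚ) * c i := by
      intro i
      have hdvd : ((c i).den : ℤ) ∣ (N : ℤ) := by
        exact_mod_cast Finset.dvd_prod_of_mem (fun i => (c i).den) (Finset.mem_univ i)
      obtain ⟨t, ht⟩ := hdvd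
      refine ⟨t * (c i).num, ?_⟩
      have h1 : (c i) * ((c i).den : ℚ) = (c i).num := Rat.mul_den_eq_num _
      push_cast
      rw [show ((N : ℚ)) = ((c i).den : ℚ) * (t : ℚ) by exact_mod_cast ht,
        mul_comm ((c i).den : ℚ) (t : ℚ), mul_assoc, mul_comm ((c i).den : ℚ) (c i), h1]
    choose m hm using hint
    have hsum : ∑ i, (m i : ℝ) * Real.log (α i) = 0 := by
      have : ∑ i, ((N : ℚ) * c i : ℚ) • Real.log (α i) = 0 := by
        calc ∑ i, ((N : ℚ) * c i : ℚ) • Real.log (α i)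
            = (N : ℚ) • ∑ i, c i • Real.log (α i) := by
              rw [Finset.smul_sum]; exact Finset.sum_congr rfl fun i _ => (mul_smul _ _ _)
          _ = 0 := by rw [hcr, smul_zero]
      calc ∑ i, (m i : ℝ) * Real.log (α i)
          = ∑ i, ((N : ℚ) * c i : ℚ) • Real.log (α i) := by
            refine Finset.sum_congr rfl fun i _ => ?_
            rw [← hm i, Rat.smul_def]; push_cast; ring
        _ = 0 := this
    have hprod : (∏ i, α i ^ m i) = 1 := by
      have hlog : Real.log (∏ i, α i ^ m i) = 0 := by
        rw [Real.log_prod (fun i _ => (zpow_pos (hpos i) _).ne')]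
        simpa [Real.log_zpow] using hsum
      have hp : 0 < ∏ i, α i ^ m i := Finset.prod_pos fun i _ => zpow_pos (hpos i) _
      rcases Real.log_eq_zero.mp hlog with h | h | h
      · exact absurd h hp.ne'
      · exact h
      · linarith
    have hm0 := hmult m hprod
    intro i
    have : (N : ℚ) * c i = 0 := by rw [← hm i, hm0 i]; norm_num
    have hN0 : (N : ℚ) ≠ 0 := by exact_mod_cast hNpos.ne'
    exact (mul_eq_zero.mp this).resolve_left hN0
  obtain ⟨g, hg, hgind⟩ := schanuel k z hli
  -- each g i must be some z j (exp z j is algebraic)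
  have hgz : ∀ i, ∃ j, g i = z j := by
    intro i
    obtain ⟨j, hj | hj⟩ := hg i
    · exact ⟨j, hj⟩
    · exfalso
      have htr : Transcendental ℚ (g i) := hgind.transcendental i
      apply htr
      rw [hj, hexp j]
      exact (halg j).algHom ((Complex.ofRealAm).restrictScalars ℚ)
  choose j hj using hgz
  -- j is injective hence bijective
  have hzinj : Function.Injective z := hli.injective
  have hginj : Function.Injective g := hgind.injective
  have hjinj : Function.Injective j := fun a b hab => by
    apply hginj; rw [hj a, hj b, hab]
  have hjbij : Function.Bijective j := (Finite.injective_iff_bijective).mp hjinj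
  -- z ∘ j = g is algebraically independent; precompose with inverse perm
  have hzj : z ∘ j = g := by funext i; exact (hj i).symm
  let e : Equiv.Perm (Fin k) := Equiv.ofBijective j hjbij
  have hzind : AlgebraicIndependent ℚ z := by
    have : AlgebraicIndependent ℚ (z ∘ j) := hzj ▸ hgind
    have h2 : AlgebraicIndependent ℚ ((z ∘ j) ∘ e.symm) := this.comp e.symm e.symm.injective
    have : (z ∘ j) ∘ (e.symm : Fin k → Fin k) = z := by
      funext i
      simp only [Function.comp_apply]
      have : j (e.symm i) = e (e.symm i) := rfl
      rw [this, Equiv.apply_symm_apply]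
    rwa [this] at h2
  -- descend from ℂ to ℝ
  exact AlgebraicIndependent.of_comp ((Complex.ofRealAm).restrictScalars ℚ) hzind
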